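/- Let ψ : ℝ → ℝ be a regularization function and let β₁, β₂ ∈ ℝ with β₁·β₂ < 0. Define G : ℝ → ℝ by G(u) = ((1+ψ(u))/2)·β₁ + ((1−ψ(u))/2)·β₂ (the layer problem of the regularization across a codimension-1 switching manifold). Then there exists a unique u* ∈ ℝ with G(u*) = 0; it satisfies ψ(u*) = (β₂+β₁)/(β₂−β₁); and G'(u*) < 0 when β₁ < 0 < β₂ (stable sliding yields a normally hyperbolic attracting critical point), while G'(u*) > 0 when β₂ < 0 < β₁ (unstable sliding yields a repelling critical point). -/

import Mathlib

open Filter Set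

/-- A regularization function: a C¹ function ψ : ℝ → ℝ with ψ' > 0 everywhere,
values in (-1,1), tending to ±1 as u → ±∞. -/
def IsRegularization (ψ : ℝ → ℝ) : Prop :=
  ContDiff ℝ 1 ψ ∧ (∀ u, 0 < deriv ψ u) ∧ (∀ u, ψ u ∈ Set.Ioo (-1 : ℝ) 1) ∧
    Tendsto ψ atTop (nhds 1) ∧ Tendsto ψ atBot (nhds (-1))

/-- Across a codimension-1 switching manifold with sliding (β₁β₂ < 0), the layer problem
G(u) = ((1+ψ(u))/2)β₁ + ((1-ψ(u))/2)β₂ has a unique zero u*, which satisfies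
ψ(u*) = (β₂+β₁)/(β₂-β₁); it is attracting (G'(u*) < 0) for stable sliding
(β₁ < 0 < β₂) and repelling (G'(u*) > 0) for unstable sliding (β₂ < 0 < β₁). -/
theorem stmt0 (ψ : ℝ → ℝ) (hψ : IsRegularization ψ) (β₁ β₂ : ℝ) (hβ : β₁ * β₂ < 0)
    (G : ℝ → ℝ) (hG : ∀ u, G u = (1 + ψ u) / 2 * β₁ + (1 - ψ u) / 2 * β₂) :
    (∃! u, G u = 0) ∧
    ∀ u, G u = 0 →
      ψ u = (β₂ + β₁) / (β₂ - β₁) ∧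
      (β₁ < 0 → 0 < β₂ → deriv G u < 0) ∧
      (β₂ < 0 → 0 < β₁ → 0 < deriv G u) := by
  obtain ⟨hC1, hd, hIoo, htop, hbot⟩ := hψ
  have hdiff : Differentiable ℝ ψ := hC1.differentiable one_ne_zero
  have hcont : Continuous ψ := hdiff.continuous
  have hne : β₂ - β₁ ≠ 0 := by
    rcases mul_neg_iff.mp hβ with ⟨h1, h2⟩ | ⟨h1, h2⟩ <;> intro h <;> nlinarith
  set c : ℝ := (β₂ + β₁) / (β₂ - β₁) with hc
  have hiff : ∀ u, G u = 0 ↔ ψ u = c := by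
    intro u
    rw [hG u, hc, eq_div_iff hne]
    constructor <;> intro h <;> linarith
  have hcmem : c ∈ Set.Ioo (-1 : ℝ) 1 := by
    rcases mul_neg_iff.mp hβ with ⟨h1, h2⟩ | ⟨h1, h2⟩
    · have hneg : β₂ - β₁ < 0 := by linarith
      constructor
      · rw [hc, lt_div_iff_of_neg hneg]; linarith
      · rw [hc, div_lt_iff_of_neg hneg]; linarith
    · have hpos : (0:ℝ) < β₂ - β₁ := by linarith
      constructor
      · rw [hc, lt_div_iff₀ hpos]; linarith
      · rw [hc, div_lt_iff₀ hpos]; linarith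
  have hmono : StrictMono ψ := strictMono_of_deriv_pos hd
  have hlt : ∀ᶠ a in atBot, ψ a < c := hbot.eventually_lt_const hcmem.1
  have hgt : ∀ᶠ b in atTop, c < ψ b := htop.eventually_const_lt hcmem.2
  obtain ⟨a, ha⟩ := hlt.exists
  obtain ⟨b, hb⟩ := hgt.exists
  have hab : a ≤ b := le_of_lt (hmono.lt_iff_lt.mp (ha.trans hb))
  obtain ⟨u₀, _, hu₀⟩ := intermediate_value_Icc hab hcont.continuousOn ⟨ha.le, hb.le⟩
  have hderivG : ∀ u, deriv G u = (β₁ - β₂) / 2 * deriv ψ u := by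
    intro u
    have hGe : G = fun u => (β₁ - β₂) / 2 * ψ u + (β₁ + β₂) / 2 := by
      funext v; rw [hG v]; ring
    rw [hGe, deriv_add_const, deriv_const_mul _ (hdiff u)]
  refine ⟨⟨u₀, (hiff u₀).mpr hu₀, fun v hv => hmono.injective (((hiff v).mp hv).trans hu₀.symm)⟩,
    fun u hu => ⟨(hiff u).mp hu, ?_, ?_⟩⟩
  · intro h1 h2
    rw [hderivG u]
    have := hd u
    nlinarith
  · intro h1 h2
    rw [hderivG u]
    have := hd u
    nlinarith
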